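/- In the RURV setting (exact arithmetic), the leading r×r block of R satisfies σ_min(R(1:r,1:r)) ≥ f·σ_r, where f = σ_min(X₁₁) and X₁₁ = X(1:r,1:r) is the leading r×r block of X = Qᵀ·Vᵀ. -/
import Mathlib
open Matrix

/-- The Euclidean norm of a real vector. -/
noncomputable def euclNorm {n : Type*} [Fintype n] (v : n → ℝ) : ℝ :=
  Real.sqrt (v ⬝ᵥ v)

/-- The smallest singular value of a real matrix: the infimum of `‖M·x‖₂` over
Euclidean-unit vectors `x`. -/
noncomputable def sigmaMin {m n : Type*} [Fintype m] [Fintype n]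
    (M : Matrix m n ℝ) : ℝ :=
  sInf {t | ∃ x : n → ℝ, euclNorm x = 1 ∧ t = euclNorm (M *ᵥ x)}

lemma dot_self_nonneg' {n : Type*} [Fintype n] (v : n → ℝ) : 0 ≤ v ⬝ᵥ v :=
  Finset.sum_nonneg fun i _ => mul_self_nonneg (v i)

lemma euclNorm_nonneg' {n : Type*} [Fintype n] (v : n → ℝ) : 0 ≤ euclNorm v :=
  Real.sqrt_nonneg _

lemma euclNorm_sq {n : Type*} [Fintype n] (v : n → ℝ) : euclNorm v ^ 2 = v ⬝ᵥ v :=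
  Real.sq_sqrt (dot_self_nonneg' v)

noncomputable def ext0 {r n : ℕ} (h : r ≤ n) (y : Fin r → ℝ) : Fin n → ℝ :=
  fun i => if hi : (i : ℕ) < r then y ⟨i, hi⟩ else 0

lemma sum_eq_head {n r : ℕ} (h : r ≤ n) (f : Fin n → ℝ)
    (h0 : ∀ i : Fin n, r ≤ (i : ℕ) → f i = 0) :
    ∑ i : Fin n, f i = ∑ i : Fin r, f (Fin.castLE h i) := by
  have key : ∀ m : ℕ, (hm : m ≤ n) →
      ∑ i : Fin m, f (Fin.castLE hm i)
        = ∑ j ∈ Finset.range m, (fun j => if hj : j < n then f ⟨j, hj⟩ else 0) j := by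
    intro m hm
    rw [← Fin.sum_univ_eq_sum_range]
    refine Finset.sum_congr rfl fun i _ => ?_
    rw [dif_pos (lt_of_lt_of_le i.2 hm)]
    rfl
  rw [show (∑ i : Fin n, f i) = ∑ i : Fin n, f (Fin.castLE le_rfl i) from rfl,
    key n le_rfl, key r h]
  symm
  refine Finset.sum_subset (Finset.range_subset_range.2 h) fun j hj hj' => ?_
  simp only [Finset.mem_range] at hj hj'
  rw [dif_pos hj]
  exact h0 ⟨j, hj⟩ (not_lt.1 hj')

lemma head_le_sum {n r : ℕ} (h : r ≤ n) (f : Fin n → ℝ) (hf : ∀ i, 0 ≤ f i) :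
    ∑ i : Fin r, f (Fin.castLE h i) ≤ ∑ i : Fin n, f i := by
  have key : ∀ m : ℕ, (hm : m ≤ n) →
      ∑ i : Fin m, f (Fin.castLE hm i)
        = ∑ j ∈ Finset.range m, (fun j => if hj : j < n then f ⟨j, hj⟩ else 0) j := by
    intro m hm
    rw [← Fin.sum_univ_eq_sum_range]
    refine Finset.sum_congr rfl fun i _ => ?_
    rw [dif_pos (lt_of_lt_of_le i.2 hm)]
    rfl
  rw [show (∑ i : Fin n, f i) = ∑ i : Fin n, f (Fin.castLE le_rfl i) from rfl,
    key n le_rfl, key r h]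
  refine Finset.sum_le_sum_of_subset_of_nonneg (Finset.range_subset_range.2 h) fun j hj _ => ?_
  simp only [Finset.mem_range] at hj
  rw [dif_pos hj]
  exact hf _

lemma mulVec_ext0 {n r : ℕ} (h : r ≤ n) (M : Matrix (Fin n) (Fin n) ℝ)
    (y : Fin r → ℝ) (i : Fin r) :
    (M *ᵥ ext0 h y) (Fin.castLE h i) = (M.submatrix (Fin.castLE h) (Fin.castLE h) *ᵥ y) i := by
  show ∑ j : Fin n, M (Fin.castLE h i) j * ext0 h y j = _
  rw [sum_eq_head h _ (fun j hj => by simp [ext0, dif_neg (not_lt.2 hj)])]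
  refine Finset.sum_congr rfl fun j _ => ?_
  simp [ext0, mulVec, dotProduct, submatrix, Fin.castLE, Fin.is_lt]

lemma euclNorm_ext0 {n r : ℕ} (h : r ≤ n) (y : Fin r → ℝ) :
    euclNorm (ext0 h y) = euclNorm y := by
  unfold euclNorm
  congr 1
  show ∑ i : Fin n, ext0 h y i * ext0 h y i = ∑ i : Fin r, y i * y i
  rw [sum_eq_head h _ (fun j hj => by simp [ext0, dif_neg (not_lt.2 hj)])]
  refine Finset.sum_congr rfl fun j _ => ?_
  simp [ext0, Fin.castLE]

/-- orthogonal matrices preserve the dot product of mulVec -/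
lemma orth_mulVec_dot {n : ℕ} {W : Matrix (Fin n) (Fin n) ℝ} (hW : Wᵀ * W = 1)
    (z : Fin n → ℝ) : (W *ᵥ z) ⬝ᵥ (W *ᵥ z) = z ⬝ᵥ z := by
  have hv : (W *ᵥ z) ᵥ* W = z := by
    rw [← vecMul_transpose, vecMul_vecMul, hW, vecMul_one]
  rw [dotProduct_mulVec, hv]

/-- RURV, exact arithmetic: with `A = P·Σ·Qᵀ` an SVD, `V` orthogonal,
`X = Qᵀ·Vᵀ`, and `A·Vᵀ = U·R` a QR decomposition, the leading `r×r` block of `R`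
satisfies `σ_min(R(1:r,1:r)) ≥ f·σ_r` where `f = σ_min(X(1:r,1:r))`. -/
theorem rurv_leading_block_lower_bound {n : ℕ} (r : ℕ) (hr1 : 1 ≤ r) (hrn : r < n)
    (A P Q V U R : Matrix (Fin n) (Fin n) ℝ) (σ : Fin n → ℝ)
    (hP : Pᵀ * P = 1) (hQ : Qᵀ * Q = 1) (hV : Vᵀ * V = 1) (hU : Uᵀ * U = 1)
    (hσdec : Antitone σ) (hσ0 : ∀ i, 0 ≤ σ i)
    (hA : A = P * diagonal σ * Qᵀ)
    (hRtri : R.BlockTriangular id)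
    (hQR : A * Vᵀ = U * R) :
    sigmaMin ((Qᵀ * Vᵀ).submatrix (Fin.castLE hrn.le) (Fin.castLE hrn.le)) *
        σ ⟨r - 1, by omega⟩ ≤
      sigmaMin (R.submatrix (Fin.castLE hrn.le) (Fin.castLE hrn.le)) := by
  have hle := hrn.le
  set X : Matrix (Fin n) (Fin n) ℝ := Qᵀ * Vᵀ with hX
  set W : Matrix (Fin n) (Fin n) ℝ := Uᵀ * P with hWdef
  have hW : Wᵀ * W = 1 := by
    have hUU : U * Uᵀ = 1 := mul_eq_one_comm.mp hU
    rw [hWdef, transpose_mul, transpose_transpose, Matrix.mul_assoc,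
      ← Matrix.mul_assoc U, hUU, Matrix.one_mul, hP]
  have hR : R = W * (diagonal σ * X) := by
    have h1 : Uᵀ * (A * Vᵀ) = R := by
      rw [hQR, ← Matrix.mul_assoc, hU, Matrix.one_mul]
    rw [← h1, hA, hWdef, hX]
    noncomm_ring
  set σr : ℝ := σ ⟨r - 1, by omega⟩ with hσr
  have hσr0 : 0 ≤ σr := hσ0 _
  set X11 := X.submatrix (Fin.castLE hle) (Fin.castLE hle) with hX11
  set R11 := R.submatrix (Fin.castLE hle) (Fin.castLE hle) with hR11
  -- nonemptiness witness : e0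
  have hFr : (1:ℝ) ≤ r := by exact_mod_cast hr1
  have hne : ∀ (M : Matrix (Fin r) (Fin r) ℝ),
      {t | ∃ x : Fin r → ℝ, euclNorm x = 1 ∧ t = euclNorm (M *ᵥ x)}.Nonempty := by
    intro M
    refine ⟨euclNorm (M *ᵥ Pi.single ⟨0, by omega⟩ 1), Pi.single ⟨0, by omega⟩ 1, ?_, rfl⟩
    unfold euclNorm
    rw [show (Pi.single (⟨0, by omega⟩ : Fin r) (1:ℝ)) ⬝ᵥ (Pi.single ⟨0, by omega⟩ 1) = 1 by
      simp [dotProduct, Pi.single_apply]]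
    exact Real.sqrt_one
  have hbdd : ∀ (M : Matrix (Fin r) (Fin r) ℝ),
      BddBelow {t | ∃ x : Fin r → ℝ, euclNorm x = 1 ∧ t = euclNorm (M *ᵥ x)} := by
    intro M
    exact ⟨0, fun t ⟨x, _, ht⟩ => ht ▸ euclNorm_nonneg' _⟩
  have hsmX0 : 0 ≤ sigmaMin X11 :=
    le_csInf (hne X11) fun t ⟨x, _, ht⟩ => ht ▸ euclNorm_nonneg' _
  -- main bound per unit vector
  refine le_csInf (hne R11) ?_
  rintro t ⟨y, hy, rfl⟩
  have hXy : sigmaMin X11 ≤ euclNorm (X11 *ᵥ y) :=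
    csInf_le (hbdd X11) ⟨y, hy, rfl⟩
  -- key: σr * euclNorm (X11 *ᵥ y) ≤ euclNorm (R11 *ᵥ y)
  have key : σr * euclNorm (X11 *ᵥ y) ≤ euclNorm (R11 *ᵥ y) := by
    have h1 : euclNorm (R11 *ᵥ y) ^ 2 = (R *ᵥ ext0 hle y) ⬝ᵥ (R *ᵥ ext0 hle y) := by
      rw [euclNorm_sq]
      show ∑ i : Fin r, (R11 *ᵥ y) i * (R11 *ᵥ y) i = ∑ i, _
      rw [sum_eq_head hle (fun i => (R *ᵥ ext0 hle y) i * (R *ᵥ ext0 hle y) i) ?_]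
      · refine Finset.sum_congr rfl fun i _ => ?_
        show (R11 *ᵥ y) i * (R11 *ᵥ y) i
            = (R *ᵥ ext0 hle y) (Fin.castLE hle i) * (R *ᵥ ext0 hle y) (Fin.castLE hle i)
        rw [mulVec_ext0 hle R y i, hR11]
      · intro i hi
        have hz : (R *ᵥ ext0 hle y) i = 0 := by
          show ∑ j, R i j * ext0 hle y j = 0
          refine Finset.sum_eq_zero fun j _ => ?_
          by_cases hj : (j : ℕ) < r
          · rw [hRtri (show id j < id i from Fin.lt_def.2 (lt_of_lt_of_le hj hi)), zero_mul]
          · simp [ext0, dif_neg hj]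
        simp only [hz, zero_mul]
    -- rewrite R *ᵥ ext0 using orthogonality
    set z : Fin n → ℝ := (diagonal σ * X) *ᵥ ext0 hle y with hz
    have h2 : (R *ᵥ ext0 hle y) ⬝ᵥ (R *ᵥ ext0 hle y) = z ⬝ᵥ z := by
      rw [hR, ← mulVec_mulVec, orth_mulVec_dot hW]
    have hzi : ∀ i, z i = σ i * (X *ᵥ ext0 hle y) i := by
      intro i
      rw [hz, ← mulVec_mulVec, mulVec_diagonal]
    -- lower bound z ⬝ᵥ z
    have h3 : σr ^ 2 * euclNorm (X11 *ᵥ y) ^ 2 ≤ z ⬝ᵥ z := by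
      rw [euclNorm_sq]
      have e1 : (X11 *ᵥ y) ⬝ᵥ (X11 *ᵥ y)
          = ∑ i : Fin r, ((X *ᵥ ext0 hle y) (Fin.castLE hle i))^2 := by
        show ∑ i : Fin r, (X11 *ᵥ y) i * (X11 *ᵥ y) i = _
        refine Finset.sum_congr rfl fun i _ => ?_
        show (X11 *ᵥ y) i * (X11 *ᵥ y) i = ((X *ᵥ ext0 hle y) (Fin.castLE hle i))^2
        rw [mulVec_ext0 hle X y i, hX11, sq]
      rw [e1, Finset.mul_sum]
      calc ∑ i : Fin r, σr ^ 2 * ((X *ᵥ ext0 hle y) (Fin.castLE hle i))^2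
          ≤ ∑ i : Fin r, (fun i => z i ^ 2) (Fin.castLE hle i) := by
            refine Finset.sum_le_sum fun i _ => ?_
            simp only [hzi, mul_pow]
            refine mul_le_mul_of_nonneg_right ?_ (sq_nonneg _)
            have : σr ≤ σ (Fin.castLE hle i) := by
              refine hσdec ?_
              rw [Fin.le_def]
              simp only [Fin.castLE]
              omega
            exact pow_le_pow_left₀ hσr0 this 2
        _ ≤ ∑ i : Fin n, z i ^ 2 := head_le_sum hle _ fun i => sq_nonneg _
        _ = z ⬝ᵥ z := by
            simp [dotProduct, sq]
    have h4 : σr ^ 2 * euclNorm (X11 *ᵥ y) ^ 2 ≤ euclNorm (R11 *ᵥ y) ^ 2 := by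
      rw [h1, h2]; exact h3
    have h5 : (σr * euclNorm (X11 *ᵥ y)) ^ 2 ≤ euclNorm (R11 *ᵥ y) ^ 2 := by
      rw [mul_pow]; exact h4
    have hpos : 0 ≤ σr * euclNorm (X11 *ᵥ y) := mul_nonneg hσr0 (euclNorm_nonneg' _)
    exact (pow_le_pow_iff_left₀ hpos (euclNorm_nonneg' _) two_ne_zero).1 h5
  calc sigmaMin X11 * σr ≤ euclNorm (X11 *ᵥ y) * σr :=
        mul_le_mul_of_nonneg_right hXy hσr0
    _ = σr * euclNorm (X11 *ᵥ y) := mul_comm _ _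
    _ ≤ euclNorm (R11 *ᵥ y) := key
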